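/- arXiv:0711.4005 — 2 statements merged into one kernel-verified Lean document; each statement's English description precedes it below -/
import Mathlib

section
/- (Discrete Gevrey–Gronwall induction.) Let H > 0, C > 0, and let j₀ be a nonnegative integer with 2^{5 j₀} > 100 · max(1, C²) · H². Suppose that for each integer j ≥ j₀, I_j : [0,∞) → [0,∞) is a differentiable function satisfying: (i) I_{j₀}(t) ≤ H² for all t ≥ 0; (ii) I_j(0) ≤ H² for all j ≥ j₀; (iii) I_j'(t) + 2^{4j} I_j(t) ≤ C · 2^{-j} H² · I_{j-1}(t) for all j > j₀ and all t ≥ 0. Then there exists a constant C₁ depending only on C such that for all j ≥ j₀ and all t ≥ 0: I_j(t) ≤ C₁^{j+1} · 2^{-min(t, 5/2) (j - j₀)²} · H². -/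
open Set

lemma comparison' {f B φ : ℝ → ℝ} {a : ℝ}
    (hf : ∀ t, 0 ≤ t → DifferentiableWithinAt ℝ f (Set.Ici 0) t)
    (hB : Differentiable ℝ B)
    (h0 : f 0 ≤ B 0)
    (hode : ∀ t, 0 ≤ t → derivWithin f (Set.Ici 0) t + a * f t ≤ φ t)
    (hφ : ∀ t, 0 ≤ t → φ t ≤ deriv B t + a * B t) :
    ∀ t, 0 ≤ t → f t ≤ B t := by
  set w : ℝ → ℝ := fun t => Real.exp (a * t) * (f t - B t) with hw
  have hE : ∀ x : ℝ, HasDerivAt (fun t => Real.exp (a * t)) (a * Real.exp (a * x)) x := by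
    intro x
    have h1 : HasDerivAt (fun t : ℝ => a * t) a x := by
      simpa using (hasDerivAt_id x).const_mul a
    exact ((Real.hasDerivAt_exp (a * x)).comp x h1).congr_deriv (mul_comm _ _)
  have hwd : ∀ x : ℝ, 0 < x →
      HasDerivAt w (a * Real.exp (a * x) * (f x - B x)
        + Real.exp (a * x) * (deriv f x - deriv B x)) x := by
    intro x hx
    have hfx : DifferentiableAt ℝ f x :=
      (hf x hx.le).differentiableAt (Ici_mem_nhds hx)
    exact (hE x).mul (hfx.hasDerivAt.sub (hB x).hasDerivAt)
  have hmono : AntitoneOn w (Set.Ici 0) := by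
    apply antitoneOn_of_deriv_nonpos (convex_Ici 0)
    · exact (Real.continuous_exp.comp (continuous_const.mul continuous_id)).continuousOn.mul
        (ContinuousOn.sub (fun t ht => (hf t ht).continuousWithinAt)
          hB.continuous.continuousOn)
    · intro x hx
      rw [interior_Ici] at hx
      exact ((hwd x hx).differentiableAt).differentiableWithinAt
    · intro x hx
      rw [interior_Ici] at hx
      rw [(hwd x hx).deriv]
      have hd : derivWithin f (Set.Ici 0) x = deriv f x :=
        derivWithin_of_mem_nhds (Ici_mem_nhds hx)
      have h1 := hode x hx.le
      have h2 := hφ x hx.le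
      rw [hd] at h1
      have hep : 0 < Real.exp (a * x) := Real.exp_pos _
      nlinarith [hep]
  intro t ht
  have := hmono (self_mem_Ici) ht ht
  simp only [hw, mul_zero, Real.exp_zero, one_mul] at this
  have hep : 0 < Real.exp (a * t) := Real.exp_pos _
  nlinarith [this]

lemma P1_lemma (κ s : ℝ) (hκ : 1 ≤ κ) (hs : 0 ≤ s) :
    (2:ℝ)^(-(min s (5/2)) * (κ-1)^2)
      ≤ (2:ℝ)^(5*κ - 5/2) * ((2:ℝ)^(-(s*κ^2)) + (2:ℝ)^(-(5/2:ℝ)*κ^2)) := by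
  have hpw : (0:ℝ) < (2:ℝ)^(5*κ-5/2 : ℝ) := by positivity
  have hc2 : (0:ℝ) < (2:ℝ)^(-(5/2:ℝ)*κ^2) := by positivity
  have he : (0:ℝ) < (2:ℝ)^(-(s*κ^2)) := by positivity
  rcases le_total s (5/2) with hcase | hcase
  · rw [min_eq_left hcase]
    have h1 : (2:ℝ)^(-s * (κ-1)^2) ≤ (2:ℝ)^((5*κ-5/2) + (-(s*κ^2))) := by
      apply Real.rpow_le_rpow_of_exponent_le one_le_two
      nlinarith
    rw [Real.rpow_add two_pos] at h1
    nlinarith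
  · rw [min_eq_right hcase]
    have heq : (2:ℝ)^(-(5/2:ℝ) * (κ-1)^2) = (2:ℝ)^(5*κ-5/2 : ℝ) * (2:ℝ)^(-(5/2:ℝ)*κ^2) := by
      rw [← Real.rpow_add two_pos]
      congr 1
      ring
    rw [heq]
    nlinarith

lemma P2_lemma (κ s : ℝ) (hs : 0 ≤ s) :
    (2:ℝ)^(-(s*κ^2)) + (2:ℝ)^(-(5/2:ℝ)*κ^2) ≤ 2 * (2:ℝ)^(-(min s (5/2)) * κ^2) := by
  have hκ2 : (0:ℝ) ≤ κ^2 := sq_nonneg κ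
  have h1 : (2:ℝ)^(-(s*κ^2)) ≤ (2:ℝ)^(-(min s (5/2)) * κ^2) := by
    apply Real.rpow_le_rpow_of_exponent_le one_le_two
    have := min_le_left s (5/2:ℝ)
    nlinarith
  have h2 : (2:ℝ)^(-(5/2:ℝ)*κ^2) ≤ (2:ℝ)^(-(min s (5/2)) * κ^2) := by
    apply Real.rpow_le_rpow_of_exponent_le one_le_two
    have := min_le_right s (5/2:ℝ)
    nlinarith
  linarith

lemma exp_eq_rpow (κ s : ℝ) :
    Real.exp (-(Real.log 2 * κ^2) * s) = (2:ℝ) ^ (-(s * κ^2)) := by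
  rw [Real.rpow_def_of_pos two_pos]
  congr 1
  ring

lemma sq_le_pow' (n : ℕ) (hn : 1 ≤ n) : ((n:ℝ))^2 * 2 ≤ (2:ℝ)^(4*n) := by
  have h1 : (n:ℝ) ≤ 2^n := by exact_mod_cast (Nat.lt_two_pow_self (n := n)).le
  have h2 : ((n:ℝ))^2 ≤ (2:ℝ)^(2*n) := by
    rw [two_mul, pow_add]
    have : (0:ℝ) ≤ n := Nat.cast_nonneg n
    nlinarith
  have h3 : (2:ℝ)^(2*n) * 2 ≤ (2:ℝ)^(4*n) := by
    rw [← pow_succ]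
    apply pow_le_pow_right₀ one_le_two
    omega
  nlinarith [pow_pos (by norm_num : (0:ℝ) < 2) (2*n)]

lemma muA_lemma (j₀ m : ℕ) (hm : j₀ ≤ m) :
    Real.log 2 * ((m:ℝ) + 1 - (j₀:ℝ))^2 ≤ (2:ℝ)^(4*(m+1)) / 2 := by
  have hL : 0 < Real.log 2 := Real.log_pos one_lt_two
  have hL1 : Real.log 2 ≤ 1 := by
    have := Real.log_two_lt_d9
    linarith
  have h1 : ((m+1 : ℕ):ℝ)^2 * 2 ≤ (2:ℝ)^(4*(m+1)) := sq_le_pow' (m+1) (by omega)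
  have h3 : ((m+1:ℕ):ℝ) = (m:ℝ)+1 := by push_cast; ring
  rw [h3] at h1
  have hj : (0:ℝ) ≤ (j₀:ℝ) := Nat.cast_nonneg _
  have hk1 : (1:ℝ) ≤ (m:ℝ) + 1 - (j₀:ℝ) := by
    have : (j₀:ℝ) ≤ (m:ℝ) := by exact_mod_cast hm
    linarith
  nlinarith

lemma cA_lemma (C H : ℝ) (hC : 0 < C) (hH : 0 < H) (j₀ m : ℕ) (hm : j₀ ≤ m)
    (hCH : 100 * (C * H^2) < (2:ℝ)^(5*j₀)) :
    C * (2:ℝ)^(-((m:ℝ)+1)) * H^2 * (2:ℝ)^(5*((m:ℝ) + 1 - (j₀:ℝ)) - 5/2)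
      ≤ (2:ℝ)^(4*(m+1)) / 2 := by
  have e1 : C * (2:ℝ)^(-((m:ℝ)+1)) * H^2 * (2:ℝ)^(5*((m:ℝ) + 1 - (j₀:ℝ)) - 5/2)
      = (C * H^2) * (2:ℝ)^((-((m:ℝ)+1)) + (5*((m:ℝ) + 1 - (j₀:ℝ)) - 5/2)) := by
    rw [Real.rpow_add two_pos]; ring
  have e2 : (2:ℝ)^(5*j₀) = (2:ℝ)^(((5*j₀:ℕ)):ℝ) := (Real.rpow_natCast 2 (5*j₀)).symm
  have e4 : (2:ℝ)^(4*(m+1)) = (2:ℝ)^(((4*(m+1):ℕ)):ℝ) := (Real.rpow_natCast 2 (4*(m+1))).symm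
  set P : ℝ := (((5*j₀:ℕ)):ℝ) with hP
  set Q : ℝ := (((4*(m+1):ℕ)):ℝ) with hQ
  have e3 : ((-((m:ℝ)+1)) + (5*((m:ℝ) + 1 - (j₀:ℝ)) - 5/2)) = Q + (-P - 5/2) := by
    rw [hP, hQ]
    push_cast
    ring
  rw [e1, e3, e4, Real.rpow_add two_pos, ← mul_assoc]
  have hpw : (0:ℝ) < (2:ℝ)^(Q:ℝ) := by positivity
  have h4 : (C * H^2) * (2:ℝ)^(Q:ℝ) * (2:ℝ)^((-P - 5/2 : ℝ))
      ≤ ((2:ℝ)^(P:ℝ)/100) * (2:ℝ)^(Q:ℝ) * (2:ℝ)^((-P - 5/2:ℝ)) := by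
    have hCH' : C * H^2 ≤ (2:ℝ)^(P:ℝ)/100 := by
      rw [← e2]; linarith
    have hnn' : (0:ℝ) ≤ (2:ℝ)^((-P - 5/2:ℝ)) := by positivity
    apply mul_le_mul_of_nonneg_right _ hnn'
    exact mul_le_mul_of_nonneg_right hCH' hpw.le
  have h5 : ((2:ℝ)^(P:ℝ)/100) * (2:ℝ)^(Q:ℝ) * (2:ℝ)^((-P - 5/2:ℝ))
      = (2:ℝ)^(Q:ℝ) * (2:ℝ)^((-(5/2) : ℝ)) / 100 := by
    have hmerge : (2:ℝ)^(P:ℝ) * (2:ℝ)^((-P - 5/2:ℝ)) = (2:ℝ)^((-(5/2)):ℝ) := by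
      rw [← Real.rpow_add two_pos]
      congr 1
      ring
    calc ((2:ℝ)^(P:ℝ)/100) * (2:ℝ)^(Q:ℝ) * (2:ℝ)^((-P - 5/2:ℝ))
        = ((2:ℝ)^(P:ℝ) * (2:ℝ)^((-P - 5/2:ℝ))) * (2:ℝ)^(Q:ℝ) / 100 := by ring
      _ = (2:ℝ)^(Q:ℝ) * (2:ℝ)^((-(5/2)):ℝ) / 100 := by rw [hmerge]; ring
  have h6 : (2:ℝ)^((-(5/2)):ℝ) ≤ 1 :=
    Real.rpow_le_one_of_one_le_of_nonpos one_le_two (by norm_num)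
  have h7 : (0:ℝ) ≤ (2:ℝ)^((-(5/2)):ℝ) := by positivity
  calc _ ≤ _ := h4
    _ = _ := h5
    _ ≤ (2:ℝ)^(Q:ℝ) / 2 := by nlinarith
set_option maxHeartbeats 800000 in
lemma step_lemma (C H : ℝ) (hC : 0 < C) (hH : 0 < H) (j₀ m : ℕ) (hm : j₀ ≤ m)
    (hCH : 100 * (C * H^2) < (2:ℝ)^(5*j₀))
    (f g : ℝ → ℝ)
    (hdiff : ∀ t, 0 ≤ t → DifferentiableWithinAt ℝ f (Set.Ici 0) t)
    (h0 : f 0 ≤ H^2)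
    (hode : ∀ t, 0 ≤ t → derivWithin f (Set.Ici 0) t + (2:ℝ)^(4*(m+1)) * f t ≤
        C * (2:ℝ)^(-(((m+1:ℕ)):ℝ)) * H^2 * g t)
    (ih : ∀ t, 0 ≤ t → g t ≤ 2^(m+1) * (2:ℝ)^(-(min t (5/2)) * ((m:ℝ) - (j₀:ℝ))^2) * H^2) :
    ∀ t, 0 ≤ t →
      f t ≤ (2:ℝ)^(m+1+1) * (2:ℝ)^(-(min t (5/2)) * (((m+1:ℕ):ℝ) - (j₀:ℝ))^2) * H^2 := by
  have hH2 : (0:ℝ) < H^2 := by positivity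
  set L : ℝ := Real.log 2 with hL
  set κ : ℝ := (m:ℝ) + 1 - (j₀:ℝ) with hκ
  have hκ1 : 1 ≤ κ := by
    have : (j₀:ℝ) ≤ (m:ℝ) := by exact_mod_cast hm
    rw [hκ]; linarith
  set A : ℝ := (2:ℝ)^(4*(m+1)) with hA
  have hApos : 0 < A := by positivity
  set Kc : ℝ := 2^(m+1) * H^2 with hKc
  have hKcpos : 0 < Kc := by positivity
  set c2 : ℝ := (2:ℝ) ^ (-(5/2:ℝ) * κ^2) with hc2
  have hc2pos : 0 < c2 := by positivity
  set B : ℝ → ℝ := fun s => Kc * (Real.exp (-(L*κ^2) * s) + c2) with hB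
  have hμA : L * κ^2 ≤ A / 2 := muA_lemma j₀ m hm
  have hcA : C * (2:ℝ)^(-((m:ℝ)+1)) * H^2 * (2:ℝ)^(5*κ - 5/2) ≤ A / 2 :=
    cA_lemma C H hC hH j₀ m hm hCH
  have hcast : ((m+1:ℕ):ℝ) = (m:ℝ) + 1 := by push_cast; ring
  have hBd : ∀ s : ℝ, HasDerivAt B (Kc * (Real.exp (-(L*κ^2) * s) * (-(L*κ^2)))) s := by
    intro s
    have h1 : HasDerivAt (fun u : ℝ => -(L*κ^2) * u) (-(L*κ^2)) s := by
      simpa using (hasDerivAt_id s).const_mul (-(L*κ^2))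
    have h2 : HasDerivAt (fun u : ℝ => Real.exp (-(L*κ^2)*u))
        (Real.exp (-(L*κ^2)*s) * (-(L*κ^2))) s := (Real.hasDerivAt_exp _).comp s h1
    have h3 : HasDerivAt (fun u : ℝ => Real.exp (-(L*κ^2)*u) + c2)
        (Real.exp (-(L*κ^2)*s) * (-(L*κ^2))) s := h2.add_const c2
    exact h3.const_mul Kc
  have hBdiff : Differentiable ℝ B := fun s => (hBd s).differentiableAt
  have hcomp : ∀ s, 0 ≤ s → f s ≤ B s := by
    apply comparison' (a := A) (φ := fun s => C * (2:ℝ) ^ (-((m+1:ℕ):ℝ)) * H^2 * g s)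
      hdiff hBdiff
    · -- f 0 ≤ B 0
      have h2 : B 0 = Kc * (1 + c2) := by
        simp [hB, Real.exp_zero]
      rw [h2]
      have h3 : (1:ℝ) ≤ 2^(m+1) := one_le_pow₀ one_le_two
      have h4 : H^2 ≤ Kc := by rw [hKc]; nlinarith
      nlinarith
    · exact hode
    · intro s hs
      have hcnn : (0:ℝ) ≤ C * (2:ℝ) ^ (-((m+1:ℕ):ℝ)) * H^2 := by positivity
      have hκm1 : ((m:ℝ) - (j₀:ℝ)) = κ - 1 := by rw [hκ]; ring
      have hIm : g s ≤ 2^(m+1) * (2:ℝ)^(-(min s (5/2)) * (κ-1)^2) * H^2 := by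
        have := ih s hs
        rw [hκm1] at this
        exact this
      rw [(hBd s).deriv]
      have hexp : Real.exp (-(L*κ^2) * s) = (2:ℝ)^(-(s * κ^2)) := exp_eq_rpow κ s
      have hEpos : 0 < Real.exp (-(L*κ^2)*s) := Real.exp_pos _
      have hP1 : (2:ℝ)^(-(min s (5/2)) * (κ-1)^2)
          ≤ (2:ℝ)^(5*κ - 5/2) * (Real.exp (-(L*κ^2)*s) + c2) := by
        rw [hexp, hc2]
        exact P1_lemma κ s hκ1 hs
      have step1 : C * (2:ℝ) ^ (-((m+1:ℕ):ℝ)) * H^2 * g s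
          ≤ C * (2:ℝ)^(-((m:ℝ)+1)) * H^2
              * (2^(m+1) * ((2:ℝ)^(5*κ-5/2 : ℝ) * (Real.exp (-(L*κ^2)*s) + c2)) * H^2) := by
        rw [hcast] at hcnn ⊢
        apply mul_le_mul_of_nonneg_left _ hcnn
        calc g s ≤ 2^(m+1) * (2:ℝ)^(-(min s (5/2)) * (κ-1)^2) * H^2 := hIm
          _ ≤ 2^(m+1) * ((2:ℝ)^(5*κ-5/2 : ℝ) * (Real.exp (-(L*κ^2)*s) + c2)) * H^2 := by
              have hp1 : (0:ℝ) ≤ (2:ℝ)^(m+1) := by positivity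
              exact mul_le_mul_of_nonneg_right
                (mul_le_mul_of_nonneg_left hP1 hp1) hH2.le
      have step2 : C * (2:ℝ)^(-((m:ℝ)+1)) * H^2
            * (2^(m+1) * ((2:ℝ)^(5*κ-5/2 : ℝ) * (Real.exp (-(L*κ^2)*s) + c2)) * H^2)
          = (C * (2:ℝ)^(-((m:ℝ)+1)) * H^2 * (2:ℝ)^(5*κ-5/2 : ℝ))
            * (Kc * (Real.exp (-(L*κ^2)*s) + c2)) := by
        rw [hKc]; ring
      have step3 : (C * (2:ℝ)^(-((m:ℝ)+1)) * H^2 * (2:ℝ)^(5*κ-5/2 : ℝ))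
            * (Kc * (Real.exp (-(L*κ^2)*s) + c2))
          ≤ (A/2) * (Kc * (Real.exp (-(L*κ^2)*s) + c2)) := by
        apply mul_le_mul_of_nonneg_right hcA
        positivity
      have step4 : (A/2) * (Kc * (Real.exp (-(L*κ^2)*s) + c2))
          ≤ Kc * (Real.exp (-(L*κ^2)*s) * (-(L*κ^2)))
            + A * (Kc * (Real.exp (-(L*κ^2)*s) + c2)) := by
        have key1 : 0 ≤ Kc * Real.exp (-(L*κ^2)*s) * (A/2 - L*κ^2) :=
          mul_nonneg (mul_nonneg hKcpos.le hEpos.le) (by linarith)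
        have key2 : 0 ≤ Kc * c2 * (A/2) := by positivity
        nlinarith [key1, key2]
      calc C * (2:ℝ) ^ (-((m+1:ℕ):ℝ)) * H^2 * g s ≤ _ := step1
        _ = _ := step2
        _ ≤ _ := step3
        _ ≤ _ := step4
  intro t ht
  have h1 := hcomp t ht
  have hcast2 : (((m+1:ℕ)):ℝ) - (j₀:ℝ) = κ := by rw [hcast, hκ]
  rw [hcast2]
  have hexp : Real.exp (-(L*κ^2) * t) = (2:ℝ)^(-(t * κ^2)) := exp_eq_rpow κ t
  have h2 : Real.exp (-(L*κ^2)*t) + c2 ≤ 2 * (2:ℝ)^(-(min t (5/2)) * κ^2) := by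
    rw [hexp, hc2]
    exact P2_lemma κ t ht
  have h4 : B t ≤ Kc * (2 * (2:ℝ)^(-(min t (5/2)) * κ^2)) :=
    mul_le_mul_of_nonneg_left h2 hKcpos.le
  have h5 : Kc * (2 * (2:ℝ)^(-(min t (5/2)) * κ^2))
      = (2:ℝ)^(m+1+1) * (2:ℝ)^(-(min t (5/2)) * κ^2) * H^2 := by
    rw [hKc, pow_succ]
    ring
  linarith [h1, h4, h5.le]

/-- Discrete Gevrey–Gronwall induction: from the family of
differential inequalities `I_j' + 2^{4j} I_j ≤ C 2^{-j} H² I_{j-1}` (`j > j₀`),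
together with `I_{j₀} ≤ H²` and `I_j(0) ≤ H²`, one deduces
`I_j(t) ≤ C₁^{j+1} 2^{-min(t,5/2)(j-j₀)²} H²`, with `C₁` depending only on `C`. -/
theorem discrete_gevrey_gronwall
    (C : ℝ) (hC : 0 < C) :
    ∃ C₁ : ℝ, 0 < C₁ ∧
      ∀ (H : ℝ), 0 < H →
      ∀ (j₀ : ℕ), 100 * max 1 (C^2) * H^2 < (2:ℝ)^(5*j₀) →
      ∀ I : ℕ → ℝ → ℝ,
        (∀ j, j₀ ≤ j → ∀ t, 0 ≤ t → 0 ≤ I j t) →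
        (∀ j, j₀ ≤ j → ∀ t, 0 ≤ t → DifferentiableWithinAt ℝ (I j) (Set.Ici 0) t) →
        (∀ t, 0 ≤ t → I j₀ t ≤ H^2) →
        (∀ j, j₀ ≤ j → I j 0 ≤ H^2) →
        (∀ j, j₀ < j → ∀ t, 0 ≤ t →
          derivWithin (I j) (Set.Ici 0) t + (2:ℝ)^(4*j) * I j t ≤
            C * (2:ℝ) ^ (-(j:ℝ)) * H^2 * I (j-1) t) →
        ∀ j, j₀ ≤ j → ∀ t, 0 ≤ t →
          I j t ≤ C₁^(j+1) * (2:ℝ) ^ (-(min t (5/2)) * ((j:ℝ) - (j₀:ℝ))^2) * H^2 := by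
  refine ⟨2, two_pos, ?_⟩
  intro H hH j₀ hj₀ I hnn hdiff hbase h0 hode
  have hH2 : (0:ℝ) < H^2 := by positivity
  have hCmax : C ≤ max 1 (C^2) := by
    rcases le_total C 1 with h | h
    · exact h.trans (le_max_left _ _)
    · exact le_trans (by nlinarith) (le_max_right _ _)
  have hCH : 100 * (C * H^2) < (2:ℝ)^(5*j₀) := by
    calc 100 * (C * H^2) ≤ 100 * max 1 (C^2) * H^2 := by
          have := mul_le_mul_of_nonneg_right hCmax hH2.le
          nlinarith
      _ < (2:ℝ)^(5*j₀) := hj₀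
  intro j hj
  induction j, hj using Nat.le_induction with
  | base =>
    intro t ht
    have he : (-(min t (5/2)) * (((j₀:ℕ):ℝ) - ((j₀:ℕ):ℝ))^2) = 0 := by ring
    rw [he, Real.rpow_zero]
    have h1 : I j₀ t ≤ H^2 := hbase t ht
    have h2 : (1:ℝ) ≤ (2:ℝ)^(j₀+1) := one_le_pow₀ one_le_two
    nlinarith
  | succ m hm ih =>
    have key := step_lemma C H hC hH j₀ m hm hCH (I (m+1)) (I m)
      (fun t ht => hdiff (m+1) (by omega) t ht)
      (h0 (m+1) (by omega))
      (fun t ht => by simpa using hode (m+1) (by omega) t ht)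
      ih
    intro t ht
    exact key t ht
end

section
/- (Discrete Gevrey–Gronwall induction, Burgers form.) Let 1 < s ≤ 2, 0 < δ < 1, D ≥ 1, and C > 0. Suppose that for each integer j ≥ 0, I_j : [0,∞) → [0,∞) is a differentiable function satisfying: (i) I_j(t) ≤ D for all j ≥ 0 and t ≥ 0; (ii) I_j'(t) + 2^{js} I_j(t) ≤ C · 2^{j(2 + 2δ(s-1) - s)} · D · I_{j-1}(t) for all j ≥ 1 and all t ≥ 0. Then there exists a constant C₀ depending only on C, s, δ such that for all j ≥ 0 and all t ≥ 0: I_j(t) ≤ (C₀ D)^{j+1} · 2^{-min(t,1)(1-δ)(s-1) j²}. -/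
open Set

lemma antitone_aux (F : ℝ → ℝ)
    (hF : ∀ t, 0 ≤ t → DifferentiableWithinAt ℝ F (Ici 0) t)
    (hF' : ∀ t, 0 < t → derivWithin F (Ici 0) t ≤ 0) :
    ∀ t, 0 ≤ t → F t ≤ F 0 := by
  intro t ht
  have hA : AntitoneOn F (Ici (0:ℝ)) := by
    apply antitoneOn_of_deriv_nonpos (convex_Ici 0)
      (fun x hx => (hF x hx).continuousWithinAt)
    · intro x hx
      rw [interior_Ici] at hx
      exact ((hF x hx.le).differentiableAt (Ici_mem_nhds hx)).differentiableWithinAt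
    · intro x hx
      rw [interior_Ici] at hx
      have := hF' x hx
      rwa [derivWithin_of_mem_nhds (Ici_mem_nhds hx)] at this
  exact hA self_mem_Ici ht ht

lemma key_pow (s δ : ℝ) (hs1 : 1 < s) (hδ0 : 0 < δ) (hδ1 : δ < 1) (n : ℕ) :
    2*((1-δ)*(s-1)*((n:ℝ)+1)^2*Real.log 2) ≤ (2:ℝ)^(((n:ℝ)+1)*s) := by
  set x := (n:ℝ)+1 with hxdef
  have hx1 : (1:ℝ) ≤ x := by
    have : (0:ℝ) ≤ (n:ℝ) := Nat.cast_nonneg n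
    linarith
  have hL : 0 < Real.log 2 := Real.log_pos one_lt_two
  have h1 : (2:ℝ)^(x*s) = (2:ℝ)^x * (2:ℝ)^(x*(s-1)) := by
    rw [← Real.rpow_add two_pos]; ring_nf
  have h2 : x*(s-1)*Real.log 2 ≤ (2:ℝ)^(x*(s-1)) := by
    calc x*(s-1)*Real.log 2 ≤ x*(s-1)*Real.log 2 + 1 := by linarith
    _ ≤ Real.exp (x*(s-1)*Real.log 2) := Real.add_one_le_exp _
    _ = (2:ℝ)^(x*(s-1)) := by rw [Real.rpow_def_of_pos two_pos]; ring_nf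
  have h3 : 2*x ≤ (2:ℝ)^x := by
    have hc : (2:ℝ)^x = ((2:ℕ)^(n+1) : ℕ) := by
      rw [hxdef]
      rw [show (n:ℝ)+1 = ((n+1 : ℕ) : ℝ) by push_cast; ring]
      rw [Real.rpow_natCast]
      push_cast; ring
    have hn : 2*(n+1) ≤ 2^(n+1) := by
      have := Nat.lt_two_pow_self (n := n)
      calc 2*(n+1) ≤ 2*2^n := by omega
      _ = 2^(n+1) := by ring
    rw [hc, hxdef]
    exact_mod_cast Nat.cast_le.mpr hn
  have hxsL : 0 ≤ x*(s-1)*Real.log 2 :=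
    mul_nonneg (mul_nonneg (by linarith) (by linarith)) hL.le
  have hstep : 2*((1-δ)*(s-1)*x^2*Real.log 2) ≤ (2*x)*(x*(s-1)*Real.log 2) := by
    nlinarith [mul_nonneg (mul_nonneg (mul_nonneg hδ0.le (sq_nonneg x)) (show (0:ℝ) ≤ s-1 by linarith)) hL.le]
  calc 2*((1-δ)*(s-1)*x^2*Real.log 2) ≤ (2*x)*(x*(s-1)*Real.log 2) := hstep
  _ ≤ (2:ℝ)^x * (2:ℝ)^(x*(s-1)) := by
      apply mul_le_mul h3 h2 hxsL (by positivity)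
  _ = (2:ℝ)^(x*s) := h1.symm

set_option maxHeartbeats 2000000 in
/-- Discrete Gevrey–Gronwall induction, Burgers form: from
`I_j ≤ D` and `I_j' + 2^{js} I_j ≤ C 2^{j(2+2δ(s-1)-s)} D I_{j-1}` one deduces
`I_j(t) ≤ (C₀ D)^{j+1} 2^{-min(t,1)(1-δ)(s-1) j²}`, with `C₀ = C₀(C,s,δ)`. -/
theorem discrete_gevrey_gronwall_burgers
    (s δ C : ℝ) (hs1 : 1 < s) (hs2 : s ≤ 2) (hδ0 : 0 < δ) (hδ1 : δ < 1) (hC : 0 < C) :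
    ∃ C₀ : ℝ, 0 < C₀ ∧
      ∀ (D : ℝ), 1 ≤ D →
      ∀ I : ℕ → ℝ → ℝ,
        (∀ j, ∀ t, 0 ≤ t → 0 ≤ I j t) →
        (∀ j, ∀ t, 0 ≤ t → DifferentiableWithinAt ℝ (I j) (Set.Ici 0) t) →
        (∀ j, ∀ t, 0 ≤ t → I j t ≤ D) →
        (∀ j : ℕ, 1 ≤ j → ∀ t, 0 ≤ t →
          derivWithin (I j) (Set.Ici 0) t + (2:ℝ) ^ ((j:ℝ)*s) * I j t ≤
            C * (2:ℝ) ^ ((j:ℝ)*(2 + 2*δ*(s-1) - s)) * D * I (j-1) t) →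
        ∀ j : ℕ, ∀ t, 0 ≤ t →
          I j t ≤ (C₀ * D)^(j+1) * (2:ℝ) ^ (-(min t 1) * (1-δ) * (s-1) * (j:ℝ)^2) := by
  have hL : 0 < Real.log 2 := Real.log_pos one_lt_two
  have ha : 0 < (1-δ)*(s-1) := by nlinarith
  refine ⟨max (6*C) 2, lt_of_lt_of_le two_pos (le_max_right _ _), ?_⟩
  set C₀ := max (6*C) 2 with hC0def
  have hC₀2 : (2:ℝ) ≤ C₀ := le_max_right _ _
  have hC₀C : 6*C ≤ C₀ := le_max_left _ _
  have hC₀ : (0:ℝ) < C₀ := by linarith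
  clear_value C₀
  intro D hD I hpos hdiff hbdd hode
  have hCD1 : (1:ℝ) ≤ C₀*D := by nlinarith
  intro j
  induction j with
  | zero =>
    intro t ht
    have h1 : I 0 t ≤ D := hbdd 0 t ht
    have h2 : -(min t 1) * (1-δ) * (s-1) * ((0:ℕ):ℝ)^2 = 0 := by push_cast; ring
    rw [h2, Real.rpow_zero]
    have : (C₀*D)^(0+1) = C₀*D := by ring
    rw [this, mul_one]
    nlinarith
  | succ n ih =>
    intro t ht
    set x := (n:ℝ)+1 with hxdef
    have hx1 : (1:ℝ) ≤ x := by
      have : (0:ℝ) ≤ (n:ℝ) := Nat.cast_nonneg n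
      rw [hxdef]; linarith
    set P := (2:ℝ)^(x*s) with hPdef
    have hP : 0 < P := Real.rpow_pos_of_pos two_pos _
    set c := (1-δ)*(s-1)*(n:ℝ)^2*Real.log 2 with hcdef
    have hc0 : 0 ≤ c := by
      rw [hcdef]
      exact mul_nonneg (mul_nonneg ha.le (sq_nonneg _)) hL.le
    set c' := (1-δ)*(s-1)*x^2*Real.log 2 with hc'def
    have hc'0 : 0 ≤ c' := by
      rw [hc'def]
      exact mul_nonneg (mul_nonneg ha.le (sq_nonneg _)) hL.le
    set d := (1-δ)*(s-1)*(2*(n:ℝ)+1)*Real.log 2 with hddef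
    have hd0 : 0 ≤ d := by
      rw [hddef]
      have : (0:ℝ) ≤ 2*(n:ℝ)+1 := by positivity
      exact mul_nonneg (mul_nonneg ha.le this) hL.le
    have hcd : c + d = c' := by rw [hcdef, hddef, hc'def, hxdef]; ring
    have hkey : 2*c' ≤ P := by
      have := key_pow s δ hs1 hδ0 hδ1 n
      rw [hc'def]; rw [hPdef, hxdef]; linarith
    have hcP : 2*c ≤ P := by
      have hnx : (n:ℝ)^2 ≤ x^2 := by
        have : (0:ℝ) ≤ (n:ℝ) := Nat.cast_nonneg n
        rw [hxdef]; nlinarith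
      have : c ≤ c' := by
        rw [hcdef, hc'def]
        exact mul_le_mul_of_nonneg_right (mul_le_mul_of_nonneg_left hnx ha.le) hL.le
      linarith
    set β := P - c with hβdef
    have hβ0 : 0 < β := by rw [hβdef]; linarith
    have hβP : P/2 ≤ β := by rw [hβdef]; linarith
    set Q := (2:ℝ)^(x*(2+2*δ*(s-1)-s)) with hQdef
    have hQ : 0 < Q := Real.rpow_pos_of_pos two_pos _
    set M := C*Q*D*(C₀*D)^(n+1) with hMdef
    have hM : 0 < M := by
      rw [hMdef]
      have h1 : (0:ℝ) < (C₀*D)^(n+1) := by positivity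
      positivity
    set K : ℝ → ℝ := fun u => Real.exp (P*u) * I (n+1) u with hKdef
    set G : ℝ → ℝ := fun u => (M/β)*Real.exp (β*u) + (M*Real.exp (-c)/P)*Real.exp (P*u) with hGdef
    clear_value x P c c' d β Q M K G
    -- derivative facts
    have hKD : ∀ u, 0 ≤ u → HasDerivWithinAt K
        (Real.exp (P*u)*(derivWithin (I (n+1)) (Ici 0) u + P * I (n+1) u)) (Ici 0) u := by
      intro u hu
      have h1 : HasDerivAt (fun v : ℝ => Real.exp (P*v)) (Real.exp (P*u)*P) u := by
        simpa using ((hasDerivAt_id u).const_mul P).exp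
      have h2 := (hdiff (n+1) u hu).hasDerivWithinAt
      have h3 := (h1.hasDerivWithinAt).mul h2
      rw [hKdef]
      exact h3.congr_deriv (by ring)
    have hGD : ∀ u : ℝ, HasDerivAt G (M*Real.exp (β*u) + M*Real.exp (-c)*Real.exp (P*u)) u := by
      intro u
      have h1 : HasDerivAt (fun v : ℝ => Real.exp (β*v)) (Real.exp (β*u)*β) u := by
        simpa using ((hasDerivAt_id u).const_mul β).exp
      have h2 : HasDerivAt (fun v : ℝ => Real.exp (P*v)) (Real.exp (P*u)*P) u := by
        simpa using ((hasDerivAt_id u).const_mul P).exp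
      have h3 := (h1.const_mul (M/β)).add (h2.const_mul (M*Real.exp (-c)/P))
      rw [hGdef]
      exact h3.congr_deriv (by field_simp)
    -- the ODE hypothesis in our notation
    have hodem : ∀ u, 0 ≤ u →
        derivWithin (I (n+1)) (Ici 0) u + P * I (n+1) u ≤ C*Q*D*I n u := by
      intro u hu
      have h := hode (n+1) (by omega) u hu
      simp only [Nat.add_sub_cancel] at h
      rw [hPdef, hQdef, hxdef]
      push_cast at h
      convert h using 3 <;> ring
    -- bound on I n from induction hypothesis
    have hIn : ∀ u, 0 ≤ u → I n u ≤ (C₀*D)^(n+1) * (Real.exp (-(c*u)) + Real.exp (-c)) := by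
      intro u hu
      have h1 := ih u hu
      have h2 : (2:ℝ)^(-(min u 1)*(1-δ)*(s-1)*(n:ℝ)^2) = Real.exp (-(c*min u 1)) := by
        rw [Real.rpow_def_of_pos two_pos]
        congr 1
        rw [hcdef]; ring
      rw [h2] at h1
      refine h1.trans ?_
      have hCD : (0:ℝ) ≤ (C₀*D)^(n+1) := by positivity
      apply mul_le_mul_of_nonneg_left _ hCD
      rcases le_total u 1 with h | h
      · rw [min_eq_left h]
        have := (Real.exp_pos (-c)).le
        linarith
      · rw [min_eq_right h]
        have := (Real.exp_pos (-(c*u))).le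
        have h3 : -(c*1) = -c := by ring
        rw [h3]
        linarith
    -- derivative of K - G is nonpositive
    have hF' : ∀ u, 0 < u → derivWithin (fun v => K v - G v) (Ici 0) u ≤ 0 := by
      intro u hu
      have hKu := hKD u hu.le
      have hGu := (hGD u).hasDerivWithinAt (s := Ici 0)
      have hsub := hKu.sub hGu
      rw [show (fun v => K v - G v) = K - G from rfl, hsub.derivWithin (uniqueDiffOn_Ici 0 u hu.le)]
      have h1 := hodem u hu.le
      have h2 := hIn u hu.le
      have hE := (Real.exp_pos (P*u)).le
      have hb1 : Real.exp (P*u)*(derivWithin (I (n+1)) (Ici 0) u + P * I (n+1) u)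
          ≤ Real.exp (P*u)*(C*Q*D*I n u) := mul_le_mul_of_nonneg_left h1 hE
      have hb2 : C*Q*D*I n u ≤ M*(Real.exp (-(c*u)) + Real.exp (-c)) := by
        have h3 : C*Q*D*I n u ≤ C*Q*D*((C₀*D)^(n+1)*(Real.exp (-(c*u)) + Real.exp (-c))) := by
          apply mul_le_mul_of_nonneg_left h2
          positivity
        rw [hMdef]; linarith [h3]
      have hb3 : Real.exp (P*u)*(C*Q*D*I n u) ≤ M*Real.exp (β*u) + M*Real.exp (-c)*Real.exp (P*u) := by
        have h4 : Real.exp (P*u)*(C*Q*D*I n u) ≤ Real.exp (P*u)*(M*(Real.exp (-(c*u)) + Real.exp (-c))) :=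
          mul_le_mul_of_nonneg_left hb2 hE
        have h5 : Real.exp (P*u)*Real.exp (-(c*u)) = Real.exp (β*u) := by
          rw [← Real.exp_add]; congr 1; rw [hβdef]; ring
        nlinarith [h4, h5]
      linarith [hb1, hb3]
    -- comparison
    have hKG := antitone_aux (fun v => K v - G v)
      (fun u hu => ((hKD u hu).sub ((hGD u).hasDerivWithinAt (s := Ici 0))).differentiableWithinAt) hF' t ht
    have hK0 : K 0 ≤ D := by
      have : K 0 = I (n+1) 0 := by rw [hKdef]; simp
      rw [this]; exact hbdd (n+1) 0 le_rfl
    have hG0 : 0 ≤ G 0 := by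
      have : G 0 = M/β + M*Real.exp (-c)/P := by rw [hGdef]; simp
      rw [this]; positivity
    have hKb : K t ≤ D + G t := by
      linarith [hKG, hK0, hG0]
    -- integrated bound
    have hIb : I (n+1) t ≤ D*Real.exp (-(P*t)) + (M/β)*Real.exp (-(c*t)) + (M/P)*Real.exp (-c) := by
      have h1 : I (n+1) t = Real.exp (-(P*t)) * K t := by
        rw [hKdef]
        have : Real.exp (-(P*t)) * (Real.exp (P*t) * I (n+1) t)
            = (Real.exp (-(P*t)) * Real.exp (P*t)) * I (n+1) t := by ring
        rw [this, ← Real.exp_add]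
        simp
      rw [h1]
      have h2 : Real.exp (-(P*t)) * K t ≤ Real.exp (-(P*t)) * (D + G t) :=
        mul_le_mul_of_nonneg_left hKb (Real.exp_pos _).le
      refine h2.trans (le_of_eq ?_)
      rw [hGdef]
      have hA1 : Real.exp (-(P*t)) * Real.exp (β*t) = Real.exp (-(c*t)) := by
        rw [← Real.exp_add]; congr 1; rw [hβdef]; ring
      have hA2 : Real.exp (-(P*t)) * Real.exp (P*t) = 1 := by
        rw [← Real.exp_add]; simp
      have : Real.exp (-(P*t)) * (D + ((M/β)*Real.exp (β*t) + (M*Real.exp (-c)/P)*Real.exp (P*t)))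
          = D*Real.exp (-(P*t)) + (M/β)*(Real.exp (-(P*t))*Real.exp (β*t))
            + (M/P)*Real.exp (-c)*(Real.exp (-(P*t))*Real.exp (P*t)) := by ring
      rw [this, hA1, hA2]
      ring
    -- final numeric estimates
    set m := min t 1 with hmdef
    have hm0 : 0 ≤ m := le_min ht zero_le_one
    have hm1 : m ≤ 1 := min_le_right _ _
    have hmt : m ≤ t := min_le_left _ _
    -- core inequality
    have hcore : Q * Real.exp d ≤ P := by
      have h1 : Real.exp d = (2:ℝ)^((1-δ)*(s-1)*(2*(n:ℝ)+1)) := by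
        rw [Real.rpow_def_of_pos two_pos, hddef]; ring_nf
      rw [h1, hQdef, ← Real.rpow_add two_pos, hPdef]
      apply Real.rpow_le_rpow_of_exponent_le one_le_two
      have hid : x*(2+2*δ*(s-1)-s) + (1-δ)*(s-1)*(2*(n:ℝ)+1) = x*s - (1-δ)*(s-1) := by
        rw [hxdef]; ring
      rw [hid]
      linarith [ha]
    have h6 : 2*(M*Real.exp d) ≤ (C₀*D)^(n+2)/3 * P := by
      have hQE : (0:ℝ) ≤ Q*Real.exp d := by positivity
      have h61 : 6*C*(Q*Real.exp d) ≤ C₀*P := mul_le_mul hC₀C hcore hQE hC₀.le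
      have hpow : (C₀*D)^(n+2) = (C₀*D)^(n+1)*(C₀*D) := pow_succ _ _
      rw [hMdef, hpow]
      have hR : (0:ℝ) ≤ D*(C₀*D)^(n+1) := by positivity
      linarith [mul_le_mul_of_nonneg_right h61 hR]
    -- term 1
    have hexp1 : Real.exp (-(P*t)) ≤ Real.exp (-(c'*m)) := by
      apply Real.exp_le_exp.mpr
      have h1 : c'*m ≤ P*m := mul_le_mul_of_nonneg_right (by linarith) hm0
      have h2 : P*m ≤ P*t := mul_le_mul_of_nonneg_left hmt hP.le
      linarith
    have e1 : D*Real.exp (-(P*t)) ≤ (C₀*D)^(n+2)/3 * Real.exp (-(c'*m)) := by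
      have hCDD : 2*D ≤ C₀*D := mul_le_mul_of_nonneg_right hC₀2 (by linarith)
      have h2 : D ≤ (C₀*D)^(n+2)/3 := by
        have h3 : (C₀*D)^2 ≤ (C₀*D)^(n+2) := pow_le_pow_right₀ hCD1 (by omega)
        have s1 : (2*D)^2 ≤ (C₀*D)^2 := pow_le_pow_left₀ (by linarith) hCDD 2
        have s2 : D ≤ D^2 := le_self_pow₀ hD two_ne_zero
        linarith [s1, s2, h3, hD]
      exact mul_le_mul h2 hexp1 (Real.exp_pos _).le (by positivity)
    -- term 2
    have h7a : M/β ≤ ((C₀*D)^(n+2)/3)/Real.exp d := by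
      have h1 : M/β ≤ 2*M/P := by
        rw [div_le_div_iff₀ hβ0 hP]
        linarith [mul_nonneg hM.le (sub_nonneg.mpr hβP)]
      refine h1.trans ?_
      rw [div_le_div_iff₀ hP (Real.exp_pos d)]
      linarith [h6]
    have hexpd : ((C₀*D)^(n+2)/3)/Real.exp d ≤ (C₀*D)^(n+2)/3 * Real.exp (-(d*m)) := by
      rw [div_eq_mul_inv, ← Real.exp_neg]
      apply mul_le_mul_of_nonneg_left _ (by positivity)
      apply Real.exp_le_exp.mpr
      linarith [mul_le_mul_of_nonneg_left hm1 hd0]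
    have e2 : (M/β)*Real.exp (-(c*t)) ≤ (C₀*D)^(n+2)/3 * Real.exp (-(c'*m)) := by
      have h1 : Real.exp (-(c*t)) ≤ Real.exp (-(c*m)) := by
        apply Real.exp_le_exp.mpr
        linarith [mul_le_mul_of_nonneg_left hmt hc0]
      calc (M/β)*Real.exp (-(c*t))
          ≤ ((C₀*D)^(n+2)/3 * Real.exp (-(d*m)))*Real.exp (-(c*m)) := by
            apply mul_le_mul (h7a.trans hexpd) h1 (Real.exp_pos _).le (by positivity)
      _ = (C₀*D)^(n+2)/3 * Real.exp (-(c'*m)) := by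
            rw [mul_assoc, ← Real.exp_add]
            congr 2
            rw [← hcd]; ring
    -- term 3
    have e3 : (M/P)*Real.exp (-c) ≤ (C₀*D)^(n+2)/3 * Real.exp (-(c'*m)) := by
      have h1 : M/P ≤ ((C₀*D)^(n+2)/3)/Real.exp d := by
        rw [div_le_div_iff₀ hP (Real.exp_pos d)]
        linarith [h6, (mul_pos hM (Real.exp_pos d)).le]
      have h2 : (((C₀*D)^(n+2)/3)/Real.exp d)*Real.exp (-c) = (C₀*D)^(n+2)/3 * Real.exp (-c') := by
        rw [div_eq_mul_inv, ← Real.exp_neg, mul_assoc, ← Real.exp_add]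
        congr 2
        linarith [hcd]
      calc (M/P)*Real.exp (-c)
          ≤ (((C₀*D)^(n+2)/3)/Real.exp d)*Real.exp (-c) :=
            mul_le_mul_of_nonneg_right h1 (Real.exp_pos _).le
      _ = (C₀*D)^(n+2)/3 * Real.exp (-c') := h2
      _ ≤ (C₀*D)^(n+2)/3 * Real.exp (-(c'*m)) := by
            apply mul_le_mul_of_nonneg_left _ (by positivity)
            apply Real.exp_le_exp.mpr
            linarith [mul_le_mul_of_nonneg_left hm1 hc'0]
    -- conclude
    push_cast
    rw [← hxdef]
    have hT : (2:ℝ)^(-m*(1-δ)*(s-1)*x^2) = Real.exp (-(c'*m)) := by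
      rw [Real.rpow_def_of_pos two_pos]
      congr 1
      rw [hc'def]; ring
    rw [hT]
    show I (n+1) t ≤ (C₀*D)^(n+2) * Real.exp (-(c'*m))
    linarith [hIb, e1, e2, e3]
end
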